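/- arXiv:1606.06253 — 4 statements merged into one kernel-verified Lean document; each statement's English description precedes it below -/
import Mathlib

section
/- For a subshift of finite type, topological transitivity implies the weak specification property: there exists τ ∈ ℕ such that for every pair of words v, w in the language, there exists a word u of length at most τ with v u w in the language. -/
private lemma mt_iff {A : Type*} (x : ℤ → A) (n : ℤ) (w : List A) :
    (∀ i : Fin w.length, x (n + (i : ℕ)) = w.get i) ↔
      (∀ j : ℕ, ∀ _ : j < w.length, x (n + j) = w[j]) := by
  constructor
  · intro hm j hj
    simpa [List.get_eq_getElem] using hm ⟨j, hj⟩
  · intro hm i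
    simpa [List.get_eq_getElem] using hm i.1 i.2

/-- **Transitivity implies weak specification for a subshift of finite type.**
`Sft` is a subshift of finite type over the finite alphabet `A`, described by the finite
set `F` of forbidden words; `L` is its language.  If the subshift is topologically
transitive (any two words of the language can be glued by some word), then there is a
uniform bound `τ` on the length of the gluing word. -/
theorem stmt_0 {A : Type*} [Fintype A]
    (Sft : Set (ℤ → A)) (F : Finset (List A))
    (hSFT : ∀ x : ℤ → A, x ∈ Sft ↔
      ∀ w ∈ F, ∀ n : ℤ, ¬ (∀ i : Fin w.length, x (n + (i : ℕ)) = w.get i))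
    (L : Set (List A))
    (hL : ∀ w : List A, w ∈ L ↔
      ∃ x ∈ Sft, ∃ n : ℤ, ∀ i : Fin w.length, x (n + (i : ℕ)) = w.get i)
    (htrans : ∀ v ∈ L, ∀ w ∈ L, ∃ u : List A, v ++ u ++ w ∈ L) :
    ∃ τ : ℕ, ∀ v ∈ L, ∀ w ∈ L, ∃ u : List A, u.length ≤ τ ∧ v ++ u ++ w ∈ L := by
  classical
  set N := F.sup List.length with hNdef
  -- choose gluing words for pairs of length-`N` patterns
  have hglue_ex : ∀ p : (Fin N → A) × (Fin N → A),
      ∃ u : List A, List.ofFn p.1 ∈ L → List.ofFn p.2 ∈ L →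
        List.ofFn p.1 ++ u ++ List.ofFn p.2 ∈ L := by
    intro p
    by_cases hg : List.ofFn p.1 ∈ L
    · by_cases hh : List.ofFn p.2 ∈ L
      · obtain ⟨u, hu⟩ := htrans _ hg _ hh
        exact ⟨u, fun _ _ => hu⟩
      · exact ⟨[], fun _ hh' => absurd hh' hh⟩
    · exact ⟨[], fun hg' _ => absurd hg' hg⟩
  choose glue hglue using hglue_ex
  refine ⟨2 * N + Finset.univ.sup
      (fun p : (Fin N → A) × (Fin N → A) => (glue p).length), ?_⟩
  intro v hv w hw
  obtain ⟨x, hxS, nx, hmx⟩ := (hL v).1 hv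
  obtain ⟨y, hyS, ny, hmy⟩ := (hL w).1 hw
  have hmx' := (mt_iff x nx v).1 hmx
  have hmy' := (mt_iff y ny w).1 hmy
  set lv := v.length with hlv
  set lw := w.length with hlw
  set gx : Fin N → A := fun j => x (nx + lv + (j : ℕ)) with hgx
  set gy : Fin N → A := fun j => y (ny - N + (j : ℕ)) with hgy
  set a := List.ofFn gx with hadef
  set b := List.ofFn gy with hbdef
  have hla : a.length = N := List.length_ofFn (f := gx)
  have hlb : b.length = N := List.length_ofFn (f := gy)
  have ha_get : ∀ j : ℕ, ∀ hj : j < N, a[j]'(hla ▸ hj) = gx ⟨j, hj⟩ := by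
    intro j hj
    simp only [hadef]
    rw [List.getElem_ofFn]
  have hb_get : ∀ j : ℕ, ∀ hj : j < N, b[j]'(hlb ▸ hj) = gy ⟨j, hj⟩ := by
    intro j hj
    simp only [hbdef]
    rw [List.getElem_ofFn]
  have haL : a ∈ L := by
    refine (hL a).2 ⟨x, hxS, nx + lv, (mt_iff x (nx + lv) a).2 ?_⟩
    intro j hj
    have hjN : j < N := hla ▸ hj
    rw [ha_get j hjN]
  have hbL : b ∈ L := by
    refine (hL b).2 ⟨y, hyS, ny - N, (mt_iff y (ny - N) b).2 ?_⟩
    intro j hj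
    have hjN : j < N := hlb ▸ hj
    rw [hb_get j hjN]
  have hab : a ++ glue (gx, gy) ++ b ∈ L := hglue (gx, gy) haL hbL
  set u0 := glue (gx, gy) with hu0
  set l0 := u0.length with hl0
  obtain ⟨z, hzS, m, hmz⟩ := (hL _).1 hab
  have hmz' := (mt_iff z m (a ++ u0 ++ b)).1 hmz
  have hlau : (a ++ u0).length = N + l0 := by simp [hla, hl0]
  have hlab : (a ++ u0 ++ b).length = N + l0 + N := by
    simp only [List.length_append, hla, hlb, hl0]
  -- `z` sees `gx` on [0, N) and `gy` on [N + l0, N + l0 + N)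
  have haux1 : ∀ j : ℕ, ∀ hj : j < N, z (m + j) = gx ⟨j, hj⟩ := by
    intro j hj
    have h1 : j < (a ++ u0 ++ b).length := by omega
    rw [hmz' j h1, List.getElem_append_left (by omega : j < (a ++ u0).length),
      List.getElem_append_left (hla ▸ hj), ha_get j hj]
  have haux3 : ∀ j : ℕ, ∀ hj : j < N, z (m + (N + l0 + j : ℕ)) = gy ⟨j, hj⟩ := by
    intro j hj
    have h1 : N + l0 + j < (a ++ u0 ++ b).length := by omega
    rw [hmz' _ h1, List.getElem_append_right (by omega : (a ++ u0).length ≤ N + l0 + j)]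
    have he : N + l0 + j - (a ++ u0).length = j := by omega
    have hp : N + l0 + j - (a ++ u0).length < b.length := by omega
    rw [show b[N + l0 + j - (a ++ u0).length]'hp = b[j]'(hlb ▸ hj) from by
      congr 1]
    exact hb_get j hj
  -- the spliced point
  set f : ℤ → A := fun i =>
    if i < (lv : ℤ) + N then x (nx + i)
    else if i < (lv : ℤ) + N + l0 then z (m + (i - lv))
    else y (ny + (i - ((lv : ℤ) + 2 * N + l0))) with hfdef
  have hf1 : ∀ i : ℤ, i < (lv : ℤ) + N → f i = x (nx + i) := by
    intro i hi
    simp only [hfdef]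
    rw [if_pos hi]
  have hf2 : ∀ i : ℤ, (lv : ℤ) + N ≤ i → i < (lv : ℤ) + N + l0 →
      f i = z (m + (i - lv)) := by
    intro i h1 h2
    simp only [hfdef]
    rw [if_neg (by omega), if_pos h2]
  have hf3 : ∀ i : ℤ, (lv : ℤ) + N + l0 ≤ i →
      f i = y (ny + (i - ((lv : ℤ) + 2 * N + l0))) := by
    intro i h1
    simp only [hfdef]
    rw [if_neg (by omega), if_neg (by omega)]
  -- `f` agrees with (shifted) `z` on the whole middle zone
  have hA2 : ∀ i : ℤ, (lv : ℤ) ≤ i → i < (lv : ℤ) + 2 * N + l0 →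
      f i = z (m + (i - lv)) := by
    intro i h1 h2
    set j := (i - lv).toNat with hjdef
    have hj : (j : ℤ) = i - lv := Int.toNat_of_nonneg (by omega)
    rcases lt_or_ge i ((lv : ℤ) + N) with hc | hc
    · have hjN : j < N := by omega
      rw [hf1 i hc, show nx + i = nx + (lv : ℤ) + (j : ℤ) from by omega,
        show m + (i - lv) = m + (j : ℤ) from by omega, haux1 j hjN]
    rcases lt_or_ge i ((lv : ℤ) + N + l0) with hc2 | hc2
    · exact hf2 i hc hc2
    · have hj2 : N + l0 ≤ j := by omega
      set j' := j - (N + l0) with hj'def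
      have hj'N : j' < N := by omega
      rw [hf3 i hc2,
        show ny + (i - ((lv : ℤ) + 2 * N + l0)) = ny - (N : ℤ) + (j' : ℤ) from by
          push_cast; omega,
        show m + (i - lv) = m + ((N + l0 + j' : ℕ) : ℤ) from by push_cast; omega,
        haux3 j' hj'N]
  -- `f` belongs to the subshift
  have hfS : f ∈ Sft := by
    refine (hSFT f).2 ?_
    intro w' hw' n hmatch
    have hk : w'.length ≤ N := by rw [hNdef]; exact Finset.le_sup hw'
    rcases le_or_gt (n + (w'.length : ℤ)) ((lv : ℤ) + N) with c1 | c1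
    · refine (hSFT x).1 hxS w' hw' (nx + n) ?_
      intro i
      have hi : ((i : ℕ) : ℤ) < (w'.length : ℤ) := by exact_mod_cast i.2
      rw [show nx + n + ((i : ℕ) : ℤ) = nx + (n + (i : ℕ)) from by ring,
        ← hf1 (n + (i : ℕ)) (by omega)]
      exact hmatch i
    rcases le_or_gt (n + (w'.length : ℤ)) ((lv : ℤ) + 2 * N + l0) with c2 | c2
    · refine (hSFT z).1 hzS w' hw' (m + (n - lv)) ?_
      intro i
      have hi : ((i : ℕ) : ℤ) < (w'.length : ℤ) := by exact_mod_cast i.2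
      rw [show m + (n - lv) + ((i : ℕ) : ℤ) = m + ((n + (i : ℕ)) - lv) from by ring,
        ← hA2 (n + (i : ℕ)) (by omega) (by omega)]
      exact hmatch i
    · refine (hSFT y).1 hyS w' hw' (ny + (n - ((lv : ℤ) + 2 * N + l0))) ?_
      intro i
      have hi : ((i : ℕ) : ℤ) < (w'.length : ℤ) := by exact_mod_cast i.2
      rw [show ny + (n - ((lv : ℤ) + 2 * N + l0)) + ((i : ℕ) : ℤ)
            = ny + ((n + (i : ℕ)) - ((lv : ℤ) + 2 * N + l0)) from by ring,
        ← hf3 (n + (i : ℕ)) (by omega)]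
      exact hmatch i
  -- conclusion
  refine ⟨a ++ u0 ++ b, ?_, ?_⟩
  · have hle : (glue (gx, gy)).length ≤ Finset.univ.sup
        (fun p : (Fin N → A) × (Fin N → A) => (glue p).length) :=
      Finset.le_sup (f := fun p : (Fin N → A) × (Fin N → A) => (glue p).length)
        (Finset.mem_univ (gx, gy))
    rw [hu0] at hl0
    simp only [List.length_append, hla, hlb]
    omega
  · refine (hL _).2 ⟨f, hfS, 0, (mt_iff f 0 (v ++ (a ++ u0 ++ b) ++ w)).2 ?_⟩
    intro j hj
    have hjlen : j < lv + (N + l0 + N) + lw := by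
      simp only [List.length_append, hla, hlb] at hj; omega
    have hjv : (v ++ (a ++ u0 ++ b)).length = lv + (N + l0 + N) := by
      simp only [List.length_append, hla, hlb, hl0, hlv]
    rcases lt_or_ge j lv with c1 | c1
    · -- inside v
      have hjl : j < (v ++ (a ++ u0 ++ b)).length := by omega
      rw [List.getElem_append_left hjl, List.getElem_append_left c1,
        hf1 ((0 : ℤ) + (j : ℕ)) (by push_cast; omega),
        show nx + ((0 : ℤ) + (j : ℕ)) = nx + (j : ℕ) from by ring]
      exact hmx' j c1
    rcases lt_or_ge j (lv + (2 * N + l0)) with c2 | c2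
    · -- middle zone: covered by z
      have hjl : j < (v ++ (a ++ u0 ++ b)).length := by omega
      set j' := j - lv with hj'def
      have hj'lt : j' < N + l0 + N := by omega
      have h1 : j' < (a ++ u0 ++ b).length := by omega
      rw [List.getElem_append_left hjl, List.getElem_append_right (by omega : v.length ≤ j)]
      rw [hA2 ((0 : ℤ) + (j : ℕ)) (by push_cast; omega) (by push_cast; omega),
        show m + (((0 : ℤ) + (j : ℕ)) - lv) = m + ((j' : ℕ) : ℤ) from by push_cast; omega,
        hmz' j' h1]
    · -- inside w
      set j' := j - (lv + (2 * N + l0)) with hj'def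
      have hj'lt : j' < lw := by omega
      rw [List.getElem_append_right (by omega : (v ++ (a ++ u0 ++ b)).length ≤ j)]
      rw [hf3 ((0 : ℤ) + (j : ℕ)) (by push_cast; omega),
        show ny + (((0 : ℤ) + (j : ℕ)) - ((lv : ℤ) + 2 * N + l0)) = ny + ((j' : ℕ) : ℤ)
          from by push_cast; omega,
        hmy' j' hj'lt]
      congr 1
      omega
end

section
/- If a discrete-time dynamical system (X, f) on a compact metric space has the weak specification property, then the suspension flow over (X, f) with constant roof 1, equipped with the Bowen–Walters metric, has the weak specification property. -/
/-- Weak specification property for a discrete-time system `(X, f)`: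
for every `δ > 0` there is `τ ∈ ℕ` such that any finite collection of orbit segments
`(x j, n j)`, `j ≤ k`, is `δ`-shadowed by a single orbit with transition gaps `≤ τ`. -/
def MapWeakSpec {X : Type*} [MetricSpace X] (f : X → X) : Prop :=
  ∀ δ > (0:ℝ), ∃ τ : ℕ, ∀ k : ℕ, ∀ x : ℕ → X, ∀ n : ℕ → ℕ,
    ∃ y : X, ∃ gap : ℕ → ℕ, gap 0 = 0 ∧ (∀ i, gap i ≤ τ) ∧
      ∀ j ≤ k, ∀ i < n j,
        dist (f^[(∑ l ∈ Finset.range (j + 1), gap l) + (∑ l ∈ Finset.range j, n l) + i] y)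
          (f^[i] (x j)) < δ

/-- Weak specification property for a flow `φ`: for every `δ > 0` there is `τ > 0` such
that any finite collection of orbit segments `(x j, t j)`, `j ≤ k`, is `δ`-shadowed by a
single orbit with transition times in `[0, τ]`. -/
def FlowWeakSpec {Y : Type*} [MetricSpace Y] (φ : ℝ → Y → Y) : Prop :=
  ∀ δ > (0:ℝ), ∃ τ > (0:ℝ), ∀ k : ℕ, ∀ x : ℕ → Y, ∀ t : ℕ → ℝ, (∀ i, 0 ≤ t i) →
    ∃ y : Y, ∃ gap : ℕ → ℝ, gap 0 = 0 ∧ (∀ i, gap i ∈ Set.Icc (0:ℝ) τ) ∧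
      ∀ j ≤ k, ∀ s ∈ Set.Icc (0:ℝ) (t j),
        dist (φ ((∑ l ∈ Finset.range (j + 1), gap l) + (∑ l ∈ Finset.range j, t l) + s) y)
          (φ s (x j)) < δ

/-- **Weak specification lifts from a map to its suspension flow with constant roof 1.**
`Y` is the suspension `(X × [0,1]) / (x,1) ∼ (f x, 0)`, presented by the identification
map `q : X × ℝ → Y` satisfying `q (x, s + 1) = q (f x, s)`, with suspension flow
`φ t (q (x, s)) = q (x, s + t)`.  The metric on `Y` is the Bowen–Walters metric,
characterized as the largest (pseudo)metric bounded by the horizontal distance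
`(1 - s) d(x, y) + s d(f x, f y)` and the vertical distance `|s - t|`. -/
theorem stmt_1 {X Y : Type*} [MetricSpace X] [CompactSpace X] [MetricSpace Y]
    (f : X → X) (hf : Continuous f) (hspec : MapWeakSpec f)
    (q : X × ℝ → Y) (hqsurj : Function.Surjective q)
    (hident : ∀ (x : X) (s : ℝ), q (x, s + 1) = q (f x, s))
    (φ : ℝ → Y → Y) (hφ : ∀ (t : ℝ) (x : X) (s : ℝ), φ t (q (x, s)) = q (x, s + t))
    (hH : ∀ x y : X, ∀ s ∈ Set.Icc (0:ℝ) 1,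
      dist (q (x, s)) (q (y, s)) ≤ (1 - s) * dist x y + s * dist (f x) (f y))
    (hV : ∀ x : X, ∀ s ∈ Set.Icc (0:ℝ) 1, ∀ t ∈ Set.Icc (0:ℝ) 1,
      dist (q (x, s)) (q (x, t)) ≤ |s - t|)
    (hmax : ∀ ρ : Y → Y → ℝ,
      (∀ a, ρ a a = 0) → (∀ a b, ρ a b = ρ b a) → (∀ a b c, ρ a c ≤ ρ a b + ρ b c) →
      (∀ x y : X, ∀ s ∈ Set.Icc (0:ℝ) 1,
        ρ (q (x, s)) (q (y, s)) ≤ (1 - s) * dist x y + s * dist (f x) (f y)) →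
      (∀ x : X, ∀ s ∈ Set.Icc (0:ℝ) 1, ∀ t ∈ Set.Icc (0:ℝ) 1,
        ρ (q (x, s)) (q (x, t)) ≤ |s - t|) →
      ∀ a b, ρ a b ≤ dist a b) :
    FlowWeakSpec φ := by
  classical
  -- iterated identification
  have qiter : ∀ (m : ℕ) (x : X) (s : ℝ), q (x, s + m) = q (f^[m] x, s) := by
    intro m
    induction m with
    | zero => intro x s; simp
    | succ m ih =>
      intro x s
      have h1 : (s + (m + 1 : ℕ) : ℝ) = (s + 1) + m := by push_cast; ring
      rw [h1, ih, hident, ← Function.iterate_succ_apply' f]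
  -- every point has a representative with nonnegative height
  have good0 : ∀ a : Y, ∃ x : X, ∃ s : ℝ, 0 ≤ s ∧ a = q (x, s) := by
    intro a
    by_contra hcon
    push_neg at hcon
    obtain ⟨⟨x₁, s₁⟩, hx₁⟩ := hqsurj a
    set Good : Y → Prop := fun b => ∃ x : X, ∃ s : ℝ, 0 ≤ s ∧ b = q (x, s) with hGood
    have hGa : ¬ Good a := by
      rintro ⟨x, s, hs, rfl⟩; exact hcon x s hs rfl
    have hGb : Good (q (x₁, 0)) := ⟨x₁, 0, le_refl _, rfl⟩
    set C : ℝ := dist a (q (x₁, 0)) + 1 with hC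
    have hC0 : 0 ≤ C := by have := dist_nonneg (x := a) (y := q (x₁, 0)); linarith
    set ρ : Y → Y → ℝ := fun b c => if Good b ↔ Good c then 0 else C with hρ
    have hρval : ∀ b c, ρ b c = 0 ∨ ρ b c = C := by
      intro b c
      by_cases h : Good b ↔ Good c
      · left; simp [hρ, h]
      · right; simp [hρ, h]
    have hρnn : ∀ b c, 0 ≤ ρ b c := by
      intro b c
      rcases hρval b c with h | h
      · exact le_of_eq h.symm
      · rw [h]; exact hC0
    have h0 : ∀ b c, (Good b ↔ Good c) → ρ b c = 0 := by
      intro b c h; simp [hρ, h]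
    have key := hmax ρ
      (fun b => h0 b b Iff.rfl)
      (by
        intro b c
        by_cases h : Good b ↔ Good c
        · rw [h0 b c h, h0 c b h.symm]
        · have h' : ¬ (Good c ↔ Good b) := fun hh => h hh.symm
          simp [hρ, h, h'])
      (by
        intro b c d
        have hbd : ρ b d ≤ C := by
          rcases hρval b d with h | h
          · rw [h]; exact hC0
          · rw [h]
        by_cases h1 : Good b ↔ Good c
        · by_cases h2 : Good c ↔ Good d
          · rw [h0 b d (h1.trans h2)]
            exact add_nonneg (hρnn b c) (hρnn c d)
          · have h2' : ρ c d = C := by simp [hρ, h2]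
            rw [h2']
            linarith [hρnn b c]
        · have h1' : ρ b c = C := by simp [hρ, h1]
          rw [h1']
          linarith [hρnn c d])
      (by
        intro x y s hs
        have hg : Good (q (x, s)) ↔ Good (q (y, s)) :=
          iff_of_true ⟨x, s, hs.1, rfl⟩ ⟨y, s, hs.1, rfl⟩
        rw [h0 _ _ hg]
        have h1 : (0:ℝ) ≤ 1 - s := by linarith [hs.2]
        exact add_nonneg (mul_nonneg h1 dist_nonneg) (mul_nonneg hs.1 dist_nonneg))
      (by
        intro x s hs t ht
        have hg : Good (q (x, s)) ↔ Good (q (x, t)) :=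
          iff_of_true ⟨x, s, hs.1, rfl⟩ ⟨x, t, ht.1, rfl⟩
        rw [h0 _ _ hg]
        exact abs_nonneg _)
      a (q (x₁, 0))
    have hρab : ρ a (q (x₁, 0)) = C := by
      have h : ¬ (Good a ↔ Good (q (x₁, 0))) := by
        intro hh; exact hGa (hh.mpr hGb)
      simp [hρ, h]
    rw [hρab] at key
    simp only [hC] at key
    linarith
  -- every point has a representative with height in [0,1)
  have good : ∀ a : Y, ∃ x : X, ∃ s : ℝ, 0 ≤ s ∧ s < 1 ∧ a = q (x, s) := by
    intro a
    obtain ⟨x, s, hs, rfl⟩ := good0 a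
    refine ⟨f^[⌊s⌋₊] x, s - ⌊s⌋₊, by linarith [Nat.floor_le hs], ?_, ?_⟩
    · have := Nat.lt_floor_add_one s; linarith
    · rw [← qiter]
      norm_num
  -- main argument
  intro δ hδ
  obtain ⟨τ₀, hτ₀⟩ := hspec δ hδ
  refine ⟨(τ₀ : ℝ) + 4, by positivity, ?_⟩
  intro k x t ht
  choose ξ σ hσ0 hσ1 hxq using fun j => good (x j)
  set n : ℕ → ℕ := fun j => ⌊t j⌋₊ + 3 with hn
  obtain ⟨z, mgap, hmg0, hmgτ, hz⟩ := hτ₀ k ξ n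
  set N : ℕ → ℕ := fun j =>
    (∑ l ∈ Finset.range (j + 1), mgap l) + (∑ l ∈ Finset.range j, n l) with hN
  set gap : ℕ → ℝ := fun j =>
    match j with
    | 0 => 0
    | j + 1 => (mgap (j + 1) : ℝ) + ((n j : ℝ) - t j) + (σ (j + 1) - σ j) with hgap
  have hfl : ∀ i, (⌊t i⌋₊ : ℝ) ≤ t i ∧ t i < (⌊t i⌋₊ : ℝ) + 1 := fun i =>
    ⟨Nat.floor_le (ht i), Nat.lt_floor_add_one (t i)⟩
  refine ⟨q (z, σ 0), gap, rfl, ?_, ?_⟩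
  · intro i
    cases i with
    | zero =>
      constructor
      · exact le_refl _
      · positivity
    | succ i =>
      have hni : (n i : ℝ) = (⌊t i⌋₊ : ℝ) + 3 := by simp [hn]
      have hmg : (mgap (i + 1) : ℝ) ≤ (τ₀ : ℝ) := by exact_mod_cast hmgτ (i + 1)
      have hmg' : (0:ℝ) ≤ (mgap (i + 1) : ℝ) := Nat.cast_nonneg _
      obtain ⟨hfl1, hfl2⟩ := hfl i
      constructor
      · show (0:ℝ) ≤ (mgap (i + 1) : ℝ) + ((n i : ℝ) - t i) + (σ (i + 1) - σ i)
        rw [hni]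
        have := hσ0 (i + 1)
        have := hσ1 i
        linarith
      · show (mgap (i + 1) : ℝ) + ((n i : ℝ) - t i) + (σ (i + 1) - σ i) ≤ (τ₀ : ℝ) + 4
        rw [hni]
        have := hσ1 (i + 1)
        have := hσ0 i
        linarith
  · -- key cumulative identity
    have key : ∀ j, (∑ l ∈ Finset.range (j + 1), gap l) + (∑ l ∈ Finset.range j, t l)
        = (N j : ℝ) - σ 0 + σ j := by
      intro j
      induction j with
      | zero =>
        simp [hN, Finset.sum_range_one, hmg0, hgap]
      | succ j ih =>
        rw [Finset.sum_range_succ (f := gap), Finset.sum_range_succ (f := t)]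
        have hNs : (N (j + 1) : ℝ) = (N j : ℝ) + (mgap (j + 1) : ℝ) + (n j : ℝ) := by
          simp only [hN, Finset.sum_range_succ]
          push_cast
          ring
        have hg : gap (j + 1) = (mgap (j + 1) : ℝ) + ((n j : ℝ) - t j) + (σ (j + 1) - σ j) := rfl
        rw [hg, hNs]
        linarith
    intro j hj s hs
    set r : ℝ := σ j + s with hr
    have hr0 : 0 ≤ r := add_nonneg (hσ0 j) hs.1
    set p : ℕ := ⌊r⌋₊ with hp
    set u : ℝ := r - p with huu
    have hu0 : 0 ≤ u := by have := Nat.floor_le hr0; simp only [huu]; linarith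
    have hu1 : u < 1 := by have := Nat.lt_floor_add_one r; simp only [huu]; linarith
    have hp2 : p + 1 < n j := by
      have h1 : r < ((⌊t j⌋₊ + 2 : ℕ) : ℝ) := by
        push_cast
        have := (hfl j).2
        have := hσ1 j
        have := hs.2
        linarith
      have h2 : p < ⌊t j⌋₊ + 2 := by
        rw [hp]
        exact Nat.floor_lt hr0 |>.mpr h1
      simp only [hn]
      omega
    have da := hz j hj p (by omega)
    have db := hz j hj (p + 1) hp2
    -- rewrite goal
    rw [hxq j, hφ, hφ]
    have h1 : σ 0 + ((∑ l ∈ Finset.range (j + 1), gap l) + (∑ l ∈ Finset.range j, t l) + s)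
        = u + ((N j + p : ℕ) : ℝ) := by
      have := key j
      push_cast
      simp only [huu, hr]
      linarith
    have h2 : σ j + s = u + (p : ℝ) := by simp only [huu, hr]; ring
    rw [h1, h2, qiter, qiter]
    have hb := hH (f^[N j + p] z) (f^[p] (ξ j)) u ⟨hu0, hu1.le⟩
    rw [← Function.iterate_succ_apply' f (N j + p) z,
      ← Function.iterate_succ_apply' f p (ξ j)] at hb
    have eN : (∑ l ∈ Finset.range (j + 1), mgap l) + (∑ l ∈ Finset.range j, n l) + p
        = N j + p := rfl
    have eN2 : (∑ l ∈ Finset.range (j + 1), mgap l) + (∑ l ∈ Finset.range j, n l) + (p + 1)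
        = N j + p + 1 := by simp only [hN]; omega
    rw [eN] at da
    rw [eN2] at db
    calc dist (q (f^[N j + p] z, u)) (q (f^[p] (ξ j), u))
        ≤ (1 - u) * dist (f^[N j + p] z) (f^[p] (ξ j))
          + u * dist (f^[N j + p + 1] z) (f^[p + 1] (ξ j)) := hb
      _ < δ := by nlinarith [dist_nonneg (x := f^[N j + p] z) (y := f^[p] (ξ j)),
          dist_nonneg (x := f^[N j + p + 1] z) (y := f^[p + 1] (ξ j))]
end

section
/- Let φ be a continuous function on a compact metric space X with flow F, let m be an invariant measure satisfying the lower Gibbs bound m(B_t(x,η)) ≥ Q^{-1} e^{−tP + ∫₀^t φ(f_s x) ds} for some P ∈ ℝ, Q > 1, η > 0. Suppose E_t is a family of sets with #E_t ≥ e^{t(h−ε')} and such that for every x ∈ E_t: (i) the Bowen balls B_t(x,η) are pairwise disjoint, and (ii) ∫₀^t φ(f_s x) ds ≥ t(∫φ dμ − δ) and |(1/t)∫₀^t ψ(f_s y) ds − ∫ψ dμ| ≤ δ for all y ∈ B_t(x,η). Then m{x : |(1/t)∫₀^t ψ(f_s x) ds − ∫ψ dμ| ≤ δ} ≥ Q^{-1}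 e^{−t(P − h − ∫φ dμ + ε' + δ)}. -/
open MeasureTheory

lemma bowen_open {X : Type*} [MetricSpace X]
    (f : ℝ → X → X) (hf : Continuous fun p : ℝ × X => f p.1 p.2)
    (t η : ℝ) (x : X) :
    IsOpen {z : X | ∀ s ∈ Set.Icc (0:ℝ) t, dist (f s x) (f s z) < η} := by
  rw [← isClosed_compl_iff]
  have hC : IsClosed {p : Set.Icc (0:ℝ) t × X | η ≤ dist (f p.1 x) (f p.1 p.2)} := by
    apply isClosed_le continuous_const
    apply Continuous.dist
    · exact hf.comp (((continuous_subtype_val.comp continuous_fst).prodMk continuous_const))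
    · exact hf.comp (((continuous_subtype_val.comp continuous_fst).prodMk continuous_snd))
  have himg : {z : X | ∀ s ∈ Set.Icc (0:ℝ) t, dist (f s x) (f s z) < η}ᶜ =
      Prod.snd '' {p : Set.Icc (0:ℝ) t × X | η ≤ dist (f p.1 x) (f p.1 p.2)} := by
    ext z
    simp only [Set.mem_compl_iff, Set.mem_setOf_eq, not_forall, not_lt, Set.mem_image,
      Prod.exists]
    constructor
    · rintro ⟨s, hs, hle⟩
      exact ⟨⟨s, hs⟩, z, hle, rfl⟩
    · rintro ⟨⟨s, hs⟩, w, hle, rfl⟩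
      exact ⟨s, hs, hle⟩
  rw [himg]
  exact isClosedMap_snd_of_compactSpace _ hC

/-- **Key lower estimate in the lower large deviations bound.**
`m` satisfies the lower Gibbs bound with constants `P, Q, η` for the potential `φ`;
`E` is a set of cardinality at least `e^{t(h-ε')}` whose Bowen `(t,η)`-balls are
pairwise disjoint, on which the Birkhoff integrals of `φ` are at least
`t(∫φ dμ − δ)`, and whose Bowen balls consist of points whose Birkhoff averages of `ψ`
are `δ`-close to `∫ψ dμ`.  Then the `m`-measure of the set of points whose Birkhoff
average of `ψ` is `δ`-close to `∫ψ dμ` is at least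
`Q⁻¹ e^{−t(P − h − ∫φ dμ + ε' + δ)}`. -/
theorem stmt_16 {X : Type*} [MetricSpace X] [CompactSpace X]
    [MeasurableSpace X] [BorelSpace X]
    (f : ℝ → X → X) (hf : Continuous fun p : ℝ × X => f p.1 p.2)
    (hf0 : ∀ x, f 0 x = x) (hfadd : ∀ s t x, f (s + t) x = f s (f t x))
    (φ ψ : X → ℝ) (hφc : Continuous φ) (hψc : Continuous ψ)
    (m μ : Measure X) [IsProbabilityMeasure m] [IsProbabilityMeasure μ]
    (P Q η h ε' δ t : ℝ) (hQ : 1 < Q) (hη : 0 < η) (ht : 0 < t) (hδ : 0 < δ)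
    (hGibbs : ∀ x : X,
      Q⁻¹ * Real.exp (-(t * P) + ∫ s in (0:ℝ)..t, φ (f s x)) ≤
        (m {y : X | ∀ s ∈ Set.Icc (0:ℝ) t, dist (f s x) (f s y) < η}).toReal)
    (E : Finset X)
    (hcard : Real.exp (t * (h - ε')) ≤ (E.card : ℝ))
    (hdisj : ∀ x ∈ E, ∀ y ∈ E, x ≠ y →
      Disjoint {z : X | ∀ s ∈ Set.Icc (0:ℝ) t, dist (f s x) (f s z) < η}
        {z : X | ∀ s ∈ Set.Icc (0:ℝ) t, dist (f s y) (f s z) < η})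
    (hφE : ∀ x ∈ E, t * ((∫ y, φ y ∂μ) - δ) ≤ ∫ s in (0:ℝ)..t, φ (f s x))
    (hψE : ∀ x ∈ E, ∀ y ∈ {z : X | ∀ s ∈ Set.Icc (0:ℝ) t, dist (f s x) (f s z) < η},
      |(1 / t) * (∫ s in (0:ℝ)..t, ψ (f s y)) - ∫ z, ψ z ∂μ| ≤ δ) :
    Q⁻¹ * Real.exp (-(t * (P - h - (∫ y, φ y ∂μ) + ε' + δ))) ≤
      (m {x : X | |(1 / t) * (∫ s in (0:ℝ)..t, ψ (f s x)) - ∫ z, ψ z ∂μ| ≤ δ}).toReal := by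
  set A := ∫ y, φ y ∂μ with hA
  set B : X → Set X := fun x => {z : X | ∀ s ∈ Set.Icc (0:ℝ) t, dist (f s x) (f s z) < η}
    with hB
  set D := {x : X | |(1 / t) * (∫ s in (0:ℝ)..t, ψ (f s x)) - ∫ z, ψ z ∂μ| ≤ δ} with hD
  have hBmeas : ∀ x : X, MeasurableSet (B x) := fun x =>
    (bowen_open f hf t η x).measurableSet
  -- union of Bowen balls is contained in D
  have hsub : (⋃ x ∈ E, B x) ⊆ D := by
    intro z hz
    simp only [Set.mem_iUnion] at hz
    obtain ⟨x, hx, hzx⟩ := hz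
    exact hψE x hx z hzx
  -- measure of union equals sum
  have hunion : m (⋃ x ∈ E, B x) = ∑ x ∈ E, m (B x) := by
    apply measure_biUnion_finset _ (fun x _ => hBmeas x)
    intro x hx y hy hxy
    exact hdisj x hx y hy hxy
  have hfin : ∀ x ∈ E, m (B x) ≠ ⊤ := fun x _ => measure_ne_top m _
  have htoReal : (m (⋃ x ∈ E, B x)).toReal = ∑ x ∈ E, (m (B x)).toReal := by
    rw [hunion, ENNReal.toReal_sum fun x hx => hfin x hx]
  -- lower bound each term
  have hterm : ∀ x ∈ E,
      Q⁻¹ * Real.exp (-(t * P) + t * (A - δ)) ≤ (m (B x)).toReal := by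
    intro x hx
    refine le_trans ?_ (hGibbs x)
    have hQ0 : (0:ℝ) ≤ Q⁻¹ := inv_nonneg.2 (le_of_lt (lt_trans one_pos hQ))
    apply mul_le_mul_of_nonneg_left _ hQ0
    exact Real.exp_le_exp.2 (by linarith [hφE x hx])
  have hsum : (E.card : ℝ) * (Q⁻¹ * Real.exp (-(t * P) + t * (A - δ))) ≤
      ∑ x ∈ E, (m (B x)).toReal := by
    calc (E.card : ℝ) * (Q⁻¹ * Real.exp (-(t * P) + t * (A - δ)))
        = ∑ _x ∈ E, Q⁻¹ * Real.exp (-(t * P) + t * (A - δ)) := by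
          rw [Finset.sum_const, nsmul_eq_mul]
      _ ≤ ∑ x ∈ E, (m (B x)).toReal := Finset.sum_le_sum hterm
  have hmono : (m (⋃ x ∈ E, B x)).toReal ≤ (m D).toReal := by
    apply ENNReal.toReal_mono (measure_ne_top m _)
    exact measure_mono hsub
  have hconst : 0 < Q⁻¹ * Real.exp (-(t * P) + t * (A - δ)) :=
    mul_pos (inv_pos.2 (lt_trans one_pos hQ)) (Real.exp_pos _)
  have hkey : Q⁻¹ * Real.exp (-(t * (P - h - A + ε' + δ))) ≤
      (E.card : ℝ) * (Q⁻¹ * Real.exp (-(t * P) + t * (A - δ))) := by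
    have : Q⁻¹ * Real.exp (-(t * (P - h - A + ε' + δ))) =
        Real.exp (t * (h - ε')) * (Q⁻¹ * Real.exp (-(t * P) + t * (A - δ))) := by
      rw [show -(t * (P - h - A + ε' + δ)) = t * (h - ε') + (-(t * P) + t * (A - δ)) by ring,
        Real.exp_add]
      ring
    rw [this]
    exact mul_le_mul_of_nonneg_right hcard (le_of_lt hconst)
  calc Q⁻¹ * Real.exp (-(t * (P - h - A + ε' + δ)))
      ≤ (E.card : ℝ) * (Q⁻¹ * Real.exp (-(t * P) + t * (A - δ))) := hkey
    _ ≤ ∑ x ∈ E, (m (B x)).toReal := hsum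
    _ = (m (⋃ x ∈ E, B x)).toReal := htoReal.symm
    _ ≤ (m D).toReal := hmono
end

section
/- Let (Σ, σ) be a topologically transitive subshift of finite type and Susp(Σ,σ) its suspension with constant roof 1. Then the suspension flow satisfies the weak periodic orbit closing property: for all δ > 0 there exists R > 0 such that for every point y and time t there is a periodic point y' of the flow with period at most t + R and d_t(y, y') < δ, where d_t is the Bowen metric for the suspension flow in the Bowen–Walters metric. -/
/-- Shift of a point of a shift-invariant set. -/
def shiftPt {A : Type*} (Sft : Set (ℤ → A))
    (h : ∀ x ∈ Sft, ∀ k : ℤ, (fun i => x (i + k)) ∈ Sft) (k : ℤ) (x : Sft) : Sft :=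
  ⟨fun i => (x : ℤ → A) (i + k), h x x.2 k⟩

/-- Connector property: there is a point of `Sft` carrying the word `uv.1` at `[0,W)` and
the word `uv.2` at `[W+n, 2W+n)`. -/
def connProp {A : Type*} (Sft : Set (ℤ → A)) (W : ℕ)
    (uv : (Fin W → A) × (Fin W → A)) (n : ℕ) : Prop :=
  ∃ z : Sft, (∀ j : Fin W, (z : ℤ → A) (j : ℕ) = uv.1 j) ∧
    (∀ j : Fin W, (z : ℤ → A) ((j : ℕ) + W + n) = uv.2 j)

/-- **The suspension of a transitive subshift of finite type has the weak periodic orbit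
closing property.** -/
theorem stmt_19 {A : Type*} [Fintype A] [TopologicalSpace A] [DiscreteTopology A]
    (Sft : Set (ℤ → A)) (F : Finset (List A))
    (hSFT : ∀ x : ℤ → A, x ∈ Sft ↔
      ∀ w ∈ F, ∀ n : ℤ, ¬ (∀ i : Fin w.length, x (n + (i : ℕ)) = w.get i))
    (S : Sft → Sft) (hS : ∀ (x : Sft) (n : ℤ), (S x : ℤ → A) n = (x : ℤ → A) (n + 1))
    (htrans : ∀ U V : Set Sft, IsOpen U → IsOpen V → U.Nonempty → V.Nonempty →
      ∃ n : ℕ, ((S^[n] '' U) ∩ V).Nonempty)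
    (dS : Sft → Sft → ℝ)
    (hdS0 : ∀ x : Sft, dS x x = 0)
    (hdS : ∀ x y : Sft, x ≠ y → dS x y =
      (1 / 2 : ℝ) ^ sInf {n : ℕ | ∃ i : ℤ, i.natAbs = n ∧ (x : ℤ → A) i ≠ (y : ℤ → A) i})
    {Y : Type*} [MetricSpace Y]
    (q : Sft × ℝ → Y) (hqsurj : Function.Surjective q)
    (hident : ∀ (x : Sft) (s : ℝ), q (x, s + 1) = q (S x, s))
    (φ : ℝ → Y → Y) (hφ : ∀ (t : ℝ) (x : Sft) (s : ℝ), φ t (q (x, s)) = q (x, s + t))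
    (hH : ∀ x y : Sft, ∀ s ∈ Set.Icc (0:ℝ) 1,
      dist (q (x, s)) (q (y, s)) ≤ (1 - s) * dS x y + s * dS (S x) (S y))
    (hV : ∀ x : Sft, ∀ s ∈ Set.Icc (0:ℝ) 1, ∀ t ∈ Set.Icc (0:ℝ) 1,
      dist (q (x, s)) (q (x, t)) ≤ |s - t|)
    (hmax : ∀ ρ : Y → Y → ℝ,
      (∀ a, ρ a a = 0) → (∀ a b, ρ a b = ρ b a) → (∀ a b c, ρ a c ≤ ρ a b + ρ b c) →
      (∀ x y : Sft, ∀ s ∈ Set.Icc (0:ℝ) 1,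
        ρ (q (x, s)) (q (y, s)) ≤ (1 - s) * dS x y + s * dS (S x) (S y)) →
      (∀ x : Sft, ∀ s ∈ Set.Icc (0:ℝ) 1, ∀ t ∈ Set.Icc (0:ℝ) 1,
        ρ (q (x, s)) (q (x, t)) ≤ |s - t|) →
      ∀ a b, ρ a b ≤ dist a b) :
    ∀ δ > (0:ℝ), ∃ R > (0:ℝ), ∀ y : Y, ∀ t ≥ (0:ℝ),
      ∃ (y' : Y) (p : ℝ), 0 < p ∧ p ≤ t + R ∧ φ p y' = y' ∧
        ∀ s ∈ Set.Icc (0:ℝ) t, dist (φ s y) (φ s y') < δ := by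
  classical
  -- shift invariance of Sft
  have hmem : ∀ x ∈ Sft, ∀ k : ℤ, (fun i => x (i + k)) ∈ Sft := by
    intro x hx k
    rw [hSFT] at hx ⊢
    intro w hw n hmatch
    refine hx w hw (n + k) (fun i => ?_)
    have h2 := hmatch i
    rw [show n + k + ((i : ℕ) : ℤ) = n + (i : ℕ) + k by ring]
    exact h2
  set T := shiftPt Sft hmem with hTdef
  have hTval : ∀ (k : ℤ) (x : Sft) (i : ℤ), (T k x : ℤ → A) i = (x : ℤ → A) (i + k) :=
    fun _ _ _ => rfl
  have hT0 : ∀ x : Sft, T 0 x = x := by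
    intro x; apply Subtype.ext; funext i
    rw [hTval, add_zero]
  have hST : ∀ (k : ℤ) (x : Sft), S (T k x) = T (k + 1) x := by
    intro k x; apply Subtype.ext; funext i
    rw [hS, hTval, hTval]
    congr 1; ring
  have hSn : ∀ (n : ℕ) (x : Sft), S^[n] x = T n x := by
    intro n
    induction n with
    | zero => intro x; simpa using (hT0 x).symm
    | succ n ih =>
      intro x
      rw [Function.iterate_succ_apply', ih, hST]
      norm_cast
  -- the shift identification lifted to q
  have hq : ∀ (k : ℤ) (x : Sft) (s : ℝ), q (T k x, s - k) = q (x, s) := by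
    intro k
    induction k using Int.induction_on with
    | zero => intro x s; rw [hT0]; norm_num
    | succ n ih =>
      intro x s
      have h1 : T ((n : ℤ) + 1) x = S (T n x) := (hST n x).symm
      have e1 : s - (((n : ℤ) + 1 : ℤ) : ℝ) = s - ((n : ℤ) : ℝ) - 1 := by push_cast; ring
      rw [h1, e1, ← hident (T (n : ℤ) x) (s - ((n : ℤ) : ℝ) - 1)]
      rw [show s - ((n : ℤ) : ℝ) - 1 + 1 = s - ((n : ℤ) : ℝ) by ring]
      exact ih x s
    | pred n ih =>
      intro x s
      have h1 : S (T (-(n : ℤ) - 1) x) = T (-(n : ℤ)) x := by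
        rw [hST]; congr 1; ring
      have h2 := hident (T (-(n : ℤ) - 1) x) (s + (n : ℝ))
      rw [h1] at h2
      have e1 : s - ((-(n : ℤ) - 1 : ℤ) : ℝ) = s + (n : ℝ) + 1 := by push_cast; ring
      rw [e1, h2, show s + (n : ℝ) = s - ((-(n : ℤ) : ℤ) : ℝ) by push_cast; ring]
      exact ih x s
  -- word length bound
  set W : ℕ := F.sup List.length + 1 with hWdef
  have hWpos : 0 < W := Nat.succ_pos _
  have hwlen : ∀ w ∈ F, w.length < W := fun w hw => Nat.lt_succ_of_le (Finset.le_sup hw)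
  -- uniform connector bound
  obtain ⟨C, hCu⟩ : ∃ C : ℕ, ∀ uv, (∃ n, connProp Sft W uv n) →
      ∃ n ≤ C, connProp Sft W uv n := by
    refine ⟨Finset.univ.sup (fun uv => if h : ∃ n, connProp Sft W uv n then Nat.find h else 0),
      fun uv h => ⟨Nat.find h, ?_, Nat.find_spec h⟩⟩
    have h6 : (if h' : ∃ n, connProp Sft W uv n then Nat.find h' else 0) ≤
        Finset.univ.sup (fun uv => if h : ∃ n, connProp Sft W uv n then Nat.find h else 0) :=
      Finset.le_sup (f := fun uv => if h : ∃ n, connProp Sft W uv n then Nat.find h else 0)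
        (Finset.mem_univ uv)
    rwa [dif_pos h] at h6
  have hC : ∀ β α : Sft, ∃ n : ℕ, n ≤ C ∧ ∃ z : Sft,
      (∀ j : ℤ, 0 ≤ j → j < W → (z : ℤ → A) j = (β : ℤ → A) j) ∧
      (∀ j : ℤ, 0 ≤ j → j < W → (z : ℤ → A) (j + W + n) = (α : ℤ → A) j) := by
    intro β α
    have hreal : ∃ n, connProp Sft W (fun j : Fin W => (β : ℤ → A) (j : ℕ),
        fun j : Fin W => (α : ℤ → A) (j : ℕ)) n := by
      set U : Set Sft := {z | ∀ j : Fin W, (z : ℤ → A) (j : ℕ) = (β : ℤ → A) (j : ℕ)} with hU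
      set V : Set Sft := {z | ∀ j : Fin W, (z : ℤ → A) ((j : ℕ) + W) = (α : ℤ → A) (j : ℕ)}
        with hV
      have hUopen : IsOpen U := by
        have : U = ⋂ j : Fin W,
            (fun z : Sft => (z : ℤ → A) ((j : ℕ) : ℤ)) ⁻¹' {(β : ℤ → A) ((j : ℕ) : ℤ)} := by
          ext z; simp [hU, Set.mem_iInter]
        rw [this]
        exact isOpen_iInter_of_finite fun j =>
          (isOpen_discrete _).preimage ((continuous_apply _).comp continuous_subtype_val)
      have hVopen : IsOpen V := by
        have : V = ⋂ j : Fin W,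
            (fun z : Sft => (z : ℤ → A) (((j : ℕ) : ℤ) + W)) ⁻¹' {(α : ℤ → A) ((j : ℕ) : ℤ)} := by
          ext z; simp [hV, Set.mem_iInter]
        rw [this]
        exact isOpen_iInter_of_finite fun j =>
          (isOpen_discrete _).preimage ((continuous_apply _).comp continuous_subtype_val)
      have hUne : U.Nonempty := ⟨β, fun j => rfl⟩
      have hVne : V.Nonempty := by
        refine ⟨T (-(W : ℤ)) α, fun j => ?_⟩
        rw [hTval]; congr 1; ring
      obtain ⟨n, w', ⟨z, hzU, rfl⟩, hwV⟩ := htrans U V hUopen hVopen hUne hVne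
      refine ⟨n, z, fun j => hzU j, fun j => ?_⟩
      have h3 := hwV j
      rw [hSn, hTval] at h3
      exact h3
    obtain ⟨n, hn, z, hz1, hz2⟩ := hCu _ hreal
    refine ⟨n, hn, z, ?_, ?_⟩
    · intro j h0 hj
      have hj' : j.toNat < W := by omega
      have e : ((j.toNat : ℕ) : ℤ) = j := Int.toNat_of_nonneg h0
      rw [← e]
      exact hz1 ⟨j.toNat, hj'⟩
    · intro j h0 hj
      have hj' : j.toNat < W := by omega
      have e : ((j.toNat : ℕ) : ℤ) = j := Int.toNat_of_nonneg h0
      rw [← e]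
      exact hz2 ⟨j.toNat, hj'⟩
  -- periodic point construction
  have hper : ∀ (x : Sft) (a b : ℤ), a + W ≤ b + 1 → ∃ (z : Sft) (p : ℤ), 0 < p ∧
      p ≤ (b - a + 1) + C ∧ (∀ i : ℤ, (z : ℤ → A) (i + p) = (z : ℤ → A) i) ∧
      (∀ i : ℤ, a ≤ i → i ≤ b → (z : ℤ → A) i = (x : ℤ → A) i) := by
    intro x a b hab
    obtain ⟨n, hnC, zc, hzc1, hzc2⟩ := hC (T (b - W + 1) x) (T a x)
    set l : ℤ := b - a + 1 with hldef
    set p : ℤ := l + n with hpdef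
    have hWl : (W : ℤ) ≤ l := by omega
    have hlp : l ≤ p := by omega
    have hp0 : 0 < p := by omega
    set h : ℤ → A := fun r => if r % p < l then (x : ℤ → A) (a + r % p)
      else (zc : ℤ → A) (r % p - l + W) with hhdef
    have hcong : ∀ r r' : ℤ, r % p = r' % p → h r = h r' := by
      intro r r' he
      simp only [hhdef, he]
    have hL2 : ∀ r : ℤ, 0 ≤ r → r < l → h r = (x : ℤ → A) (a + r) := by
      intro r h0 h1
      simp only [hhdef]
      rw [Int.emod_eq_of_lt h0 (by omega)]
      exact if_pos h1
    have hL1 : ∀ r : ℤ, l - W ≤ r → r < p + W → h r = (zc : ℤ → A) (r - l + W) := by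
      intro r h0 h1
      by_cases hrl : r < l
      · rw [hL2 r (by omega) hrl]
        have h5 : (zc : ℤ → A) (r - l + W) = (x : ℤ → A) ((r - l + W) + (b - W + 1)) :=
          hzc1 (r - l + W) (by omega) (by omega)
        rw [show a + r = (r - l + (W : ℤ)) + (b - (W : ℤ) + 1) by omega, ← h5]
      · by_cases hrp : r < p
        · simp only [hhdef]
          rw [Int.emod_eq_of_lt (by omega) hrp]
          exact if_neg hrl
        · have hmod : r % p = r - p := by
            calc r % p = (r - p + p * 1) % p := by congr 1; ring
              _ = (r - p) % p := Int.add_mul_emod_self_left (r - p) p 1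
              _ = r - p := Int.emod_eq_of_lt (a := r - p) (b := p) (by omega) (by omega)
          simp only [hhdef]
          rw [hmod, if_pos (show r - p < l by omega)]
          have h5 : (zc : ℤ → A) ((r - p) + W + n) = (x : ℤ → A) ((r - p) + a) :=
            hzc2 (r - p) (by omega) (by omega)
          rw [show a + (r - p) = r - p + a by ring,
            show r - l + (W : ℤ) = r - p + (W : ℤ) + (n : ℤ) by omega, ← h5]
    set yS : ℤ → A := fun i => h (i - a) with hySdef
    have hshiftmod : ∀ (m i : ℤ), h (m % p + i) = h (m + i) := by
      intro m i
      refine hcong _ _ ?_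
      conv_rhs => rw [← Int.emod_add_mul_ediv m p]
      rw [show m % p + p * (m / p) + i = (m % p + i) + p * (m / p) by ring,
        Int.add_mul_emod_self_left]
    have hmem' : yS ∈ Sft := by
      rw [hSFT]
      intro w hw n₀ hmatch
      set r₀ : ℤ := (n₀ - a) % p with hr0def
      have hr00 : 0 ≤ r₀ := Int.emod_nonneg _ (by omega)
      have hr0p : r₀ < p := Int.emod_lt_of_pos _ hp0
      have hmatch' : ∀ i : Fin w.length, h (r₀ + (i : ℕ)) = w.get i := by
        intro i
        rw [hr0def, hshiftmod]
        rw [show n₀ - a + ((i : ℕ) : ℤ) = (n₀ + (i : ℕ)) - a by ring]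
        exact hmatch i
      have hwW : w.length < W := hwlen w hw
      by_cases hcase : r₀ + (w.length : ℤ) ≤ l
      · refine (hSFT (x : ℤ → A)).mp x.2 w hw (a + r₀) (fun i => ?_)
        have hi := i.isLt
        have h1 := hmatch' i
        rw [hL2 (r₀ + (i : ℕ)) (by omega) (by omega)] at h1
        rw [show (a + r₀) + ((i : ℕ) : ℤ) = a + (r₀ + (i : ℕ)) by ring]
        exact h1
      · refine (hSFT (zc : ℤ → A)).mp zc.2 w hw (r₀ - l + W) (fun i => ?_)
        have hi := i.isLt
        have h1 := hmatch' i
        rw [hL1 (r₀ + (i : ℕ)) (by omega) (by omega)] at h1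
        rw [show (r₀ - l + (W : ℤ)) + ((i : ℕ) : ℤ) = (r₀ + (i : ℕ)) - l + W by ring]
        exact h1
    refine ⟨⟨yS, hmem'⟩, p, hp0, by omega, ?_, ?_⟩
    · intro i
      show h (i + p - a) = h (i - a)
      refine hcong _ _ ?_
      rw [show i + p - a = (i - a) + p * 1 by ring, Int.add_mul_emod_self_left]
    · intro i hai hib
      show h (i - a) = _
      rw [hL2 (i - a) (by omega) (by omega), show a + (i - a) = i by ring]
  -- distance bound on the base
  have hDSB : ∀ (N : ℕ) (x y : Sft), (∀ i : ℤ, i.natAbs ≤ N → (x : ℤ → A) i = (y : ℤ → A) i) →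
      dS x y ≤ (1 / 2 : ℝ) ^ N := by
    intro N x y hagree
    by_cases hxy : x = y
    · rw [hxy, hdS0]; positivity
    · rw [hdS x y hxy]
      have hne : ∃ i : ℤ, (x : ℤ → A) i ≠ (y : ℤ → A) i := by
        by_contra hc
        push_neg at hc
        exact hxy (Subtype.ext (funext hc))
      have hDne : {n : ℕ | ∃ i : ℤ, i.natAbs = n ∧ (x : ℤ → A) i ≠ (y : ℤ → A) i}.Nonempty :=
        ⟨hne.choose.natAbs, hne.choose, rfl, hne.choose_spec⟩
      obtain ⟨i, hi, hxyi⟩ := Nat.sInf_mem hDne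
      have hNi : N < i.natAbs := by
        by_contra hcon
        push_neg at hcon
        exact hxyi (hagree i hcon)
      have hNs : N ≤ sInf {n : ℕ | ∃ i : ℤ, i.natAbs = n ∧ (x : ℤ → A) i ≠ (y : ℤ → A) i} := by
        omega
      exact pow_le_pow_of_le_one (by norm_num) (by norm_num) hNs
  -- main argument
  intro δ hδ
  obtain ⟨N, hN⟩ : ∃ N : ℕ, (1 / 2 : ℝ) ^ N < δ := exists_pow_lt_of_lt_one hδ (by norm_num)
  refine ⟨(C : ℝ) + 2 * N + 2 * W + 3, by positivity, ?_⟩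
  intro y t ht
  obtain ⟨⟨x, s⟩, rfl⟩ := hqsurj y
  set x₀ : Sft := T ⌊s⌋ x with hx0def
  set s₀ : ℝ := s - ⌊s⌋ with hs0def
  have hs00 : 0 ≤ s₀ := by
    rw [hs0def]; linarith [Int.floor_le s]
  have hs01 : s₀ < 1 := by
    rw [hs0def]; linarith [Int.lt_floor_add_one s]
  have hqx : q (x₀, s₀) = q (x, s) := hq ⌊s⌋ x s
  set b : ℤ := ⌈s₀ + t⌉ + N + W with hbdef
  set a : ℤ := -(N : ℤ) - W with hadef
  have hceil0 : 0 ≤ ⌈s₀ + t⌉ := Int.ceil_nonneg (by linarith)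
  obtain ⟨z, p, hp0, hpb, hzper, hzag⟩ := hper x₀ a b (by omega)
  have hzT : T p z = z := Subtype.ext (funext fun i => hzper i)
  refine ⟨q (z, s₀), (p : ℝ), by exact_mod_cast hp0, ?_, ?_, ?_⟩
  · have h1 : (p : ℝ) ≤ ((b - a + 1 + C : ℤ) : ℝ) := by exact_mod_cast hpb
    have h2 : ((⌈s₀ + t⌉ : ℤ) : ℝ) < s₀ + t + 1 := Int.ceil_lt_add_one _
    have h3 : ((b - a + 1 + C : ℤ) : ℝ) =
        ((⌈s₀ + t⌉ : ℤ) : ℝ) + 2 * N + 2 * W + 1 + C := by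
      rw [hbdef, hadef]; push_cast; ring
    rw [h3] at h1
    linarith
  · rw [hφ]
    have h4 := hq p z (s₀ + p)
    rw [hzT] at h4
    rw [← h4]
    norm_num
  · intro u hu
    obtain ⟨hu0, hut⟩ := hu
    rw [← hqx, hφ, hφ]
    set k : ℤ := ⌊s₀ + u⌋ with hkdef
    have hk0 : 0 ≤ k := Int.floor_nonneg.mpr (by linarith)
    have hkle : k ≤ ⌈s₀ + t⌉ :=
      le_trans (Int.floor_le_floor (by linarith)) (Int.floor_le_ceil _)
    have hσ0 : 0 ≤ s₀ + u - k := by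
      rw [hkdef]; linarith [Int.floor_le (s₀ + u)]
    have hσ1 : s₀ + u - k ≤ 1 := by
      rw [hkdef]; linarith [Int.lt_floor_add_one (s₀ + u)]
    have hq1 : q (T k x₀, s₀ + u - k) = q (x₀, s₀ + u) := hq k x₀ (s₀ + u)
    have hq2 : q (T k z, s₀ + u - k) = q (z, s₀ + u) := hq k z (s₀ + u)
    rw [← hq1, ← hq2]
    have hHb := hH (T k x₀) (T k z) (s₀ + u - k) ⟨hσ0, hσ1⟩
    have hd1 : dS (T k x₀) (T k z) ≤ (1 / 2 : ℝ) ^ N := by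
      refine hDSB N _ _ (fun i hi => ?_)
      rw [hTval, hTval]
      exact (hzag (i + k) (by omega) (by omega)).symm
    have hd2 : dS (S (T k x₀)) (S (T k z)) ≤ (1 / 2 : ℝ) ^ N := by
      rw [hST, hST]
      refine hDSB N _ _ (fun i hi => ?_)
      rw [hTval, hTval]
      exact (hzag (i + (k + 1)) (by omega) (by omega)).symm
    calc dist (q (T k x₀, s₀ + u - k)) (q (T k z, s₀ + u - k))
        ≤ (1 - (s₀ + u - k)) * dS (T k x₀) (T k z)
          + (s₀ + u - k) * dS (S (T k x₀)) (S (T k z)) := hHb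
      _ ≤ (1 - (s₀ + u - k)) * (1 / 2 : ℝ) ^ N + (s₀ + u - k) * (1 / 2 : ℝ) ^ N := by
          exact add_le_add (mul_le_mul_of_nonneg_left hd1 (by linarith))
            (mul_le_mul_of_nonneg_left hd2 hσ0)
      _ = (1 / 2 : ℝ) ^ N := by ring
      _ < δ := hN
end
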